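/- arXiv:math/0509103 — 5 statements merged into one kernel-verified Lean document; each statement's English description precedes it below -/
import Mathlib

section
/- Let D be a C*-algebra, let p and q be projections in D, and suppose there exists x ∈ D with ‖x p x* − q‖ < 1/2. Then q is Murray–von Neumann equivalent to a subprojection of p; that is, there exists v ∈ D with v* v = q and v v* ≤ p. -/
/-- Cuntz subequivalence of elements of a C*-algebra: `a ≾ b` iff there is a sequence
`(x k)` with `x k * b * (x k)⋆ → a` (equivalently, with stars arranged as below). -/
def CuntzLE {A : Type*} [NonUnitalRing A] [StarRing A] [Norm A] (a b : A) : Prop :=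
  ∃ x : ℕ → A,
    Filter.Tendsto (fun k => ‖star (x k) * b * x k - a‖) Filter.atTop (nhds 0)

lemma commute_cfc_aux {A : Type*} [CStarAlgebra A] {u w : A} (hu : IsSelfAdjoint u)
    (hw_sa : IsSelfAdjoint w) (hw2 : w * w = 1) (hcomm : w * u = u * w) (f : ℝ → ℝ) :
    w * cfc f u = cfc f u * w := by
  refine cfc_cases (fun z => w * z = z * w) u f (by simp) fun hf hu' => ?_
  set φ := cfcHom (R := ℝ) hu' with hφ
  let ψ : C(spectrum ℝ u, ℝ) →⋆ₐ[ℝ] A :=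
  { toFun := fun g => w * φ g * w
    map_one' := by simp [hw2]
    map_mul' := fun g₁ g₂ => by
      have : (w * φ g₁ * w) * (w * φ g₂ * w) = w * φ g₁ * (w * w) * φ g₂ * w := by
        noncomm_ring
      simp only [map_mul]
      rw [this, hw2]; noncomm_ring
    map_zero' := by simp
    map_add' := fun g₁ g₂ => by simp only [map_add]; noncomm_ring
    commutes' := fun r => by
      show w * φ (algebraMap ℝ _ r) * w = algebraMap ℝ A r
      rw [AlgHomClass.commutes]
      simp only [Algebra.algebraMap_eq_smul_one, mul_smul_comm, smul_mul_assoc, mul_one, hw2]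
    map_star' := fun g => by
      simp only [map_star, star_mul, hw_sa.star_eq, mul_assoc] }
  have hψc : Continuous ψ :=
    (continuous_const.mul (cfcHom_continuous hu')).mul continuous_const
  have hψid : ψ ((ContinuousMap.id ℝ).restrict (spectrum ℝ u)) = u := by
    show w * φ _ * w = u
    rw [cfcHom_id hu', hcomm, mul_assoc, hw2, mul_one]
  have heq := cfcHom_eq_of_continuous_of_map_id hu' ψ hψc hψid
  have h1 : φ ⟨_, hf.restrict⟩ = w * φ ⟨_, hf.restrict⟩ * w :=
    DFunLike.congr_fun heq _
  calc w * φ ⟨_, hf.restrict⟩ = w * (w * φ ⟨_, hf.restrict⟩ * w) := by rw [← h1]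
    _ = φ ⟨_, hf.restrict⟩ * w := by rw [← mul_assoc, ← mul_assoc, hw2, one_mul]


lemma cstar_key {A : Type*} [CStarAlgebra A] [Nontrivial A] (P Q X : A)
    (hPsa : star P = P) (hPP : P * P = P) (hQsa : star Q = Q) (hQQ : Q * Q = Q)
    (hXn : ‖X * P * star X - Q‖ < 1 / 2) :
    ∃ C' : A, star (Q * C') = Q * C' ∧
      (Q * C') * (X * P * star X) * (Q * C') = Q := by
  set Y : A := Q * X with hY
  have hsY : star Y = star X * Q := by rw [hY, star_mul, hQsa]
  set B : A := Y * P * star Y with hB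
  have hQY : Q * Y = Y := by rw [hY, ← mul_assoc, hQQ]
  have hYQ : star Y * Q = star Y := by rw [hsY, mul_assoc, hQQ]
  have hQB : Q * B = B := by rw [hB, ← mul_assoc, ← mul_assoc, hQY]
  have hBQ : B * Q = B := by rw [hB, mul_assoc, hYQ]
  have hBsa : star B = B := by
    rw [hB]; simp only [star_mul, star_star, hPsa, mul_assoc]
  set U : A := 1 - Q + B with hU
  have hUsa : IsSelfAdjoint U := by
    rw [IsSelfAdjoint, hU]
    simp only [star_add, star_sub, star_one, hQsa, hBsa]
  have hQn : ‖Q‖ ≤ 1 := by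
    have h := CStarRing.norm_star_mul_self (x := Q)
    rw [hQsa, hQQ] at h
    nlinarith [norm_nonneg Q]
  have hU1 : ‖U - 1‖ < 1 / 2 := by
    have h1 : U - 1 = Q * ((X * P * star X) - Q) * Q := by
      have e1 : Q * ((X * P * star X) - Q) * Q
          = Q * X * P * (star X * Q) - Q * (Q * Q) := by noncomm_ring
      rw [e1, hQQ, hQQ, hU, hB, hsY, hY]
      noncomm_ring
    calc ‖U - 1‖ = ‖Q * ((X * P * star X) - Q) * Q‖ := by rw [h1]
      _ ≤ ‖Q * ((X * P * star X) - Q)‖ * ‖Q‖ := norm_mul_le _ _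
      _ ≤ ‖Q‖ * ‖(X * P * star X) - Q‖ * ‖Q‖ := by
          gcongr; exact norm_mul_le _ _
      _ ≤ 1 * ‖(X * P * star X) - Q‖ * 1 := by
          gcongr <;> exact hQn
      _ < 1 / 2 := by rw [one_mul, mul_one]; exact hXn
  have hspec : ∀ t ∈ spectrum ℝ U, 1 / 2 ≤ t := by
    intro t ht
    have h2 : t - 1 ∈ spectrum ℝ (U - 1) := by
      have h := Set.sub_mem_sub ht (Set.mem_singleton (1 : ℝ))
      rwa [spectrum.sub_singleton_eq, map_one] at h
    have h3 : ‖t - 1‖ ≤ ‖U - 1‖ := spectrum.norm_le_norm_of_mem h2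
    rw [Real.norm_eq_abs] at h3
    have h4 := abs_lt.mp (lt_of_le_of_lt h3 hU1)
    linarith [h4.1]
  set f : ℝ → ℝ := fun t => (Real.sqrt t)⁻¹ with hf
  have hfc : ContinuousOn f (spectrum ℝ U) := by
    apply Real.continuous_sqrt.continuousOn.inv₀
    intro t ht
    have := hspec t ht
    exact Real.sqrt_ne_zero'.mpr (by linarith)
  set C' : A := cfc f U with hC'
  have hC'sa : star C' = C' := (IsSelfAdjoint.cfc (f := f) (a := U)).star_eq
  have hC'U : C' * U * C' = 1 := by
    have h4 : cfc (fun t : ℝ => f t * t * f t) U = C' * U * C' := by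
      rw [cfc_mul (fun t => f t * t) f U (hfc.mul (continuousOn_id' _)) hfc,
        cfc_mul f (fun t => t) U hfc (continuousOn_id' _), cfc_id' ℝ U hUsa, hC']
    have h5 : cfc (fun t : ℝ => f t * t * f t) U = 1 := by
      rw [cfc_congr (g := fun _ => (1 : ℝ)) ?_, cfc_const 1 U hUsa, map_one]
      intro t ht
      have h6 := hspec t ht
      have ht0 : (0 : ℝ) < t := by linarith
      have hs : Real.sqrt t ≠ 0 := Real.sqrt_ne_zero'.mpr ht0
      show (Real.sqrt t)⁻¹ * t * (Real.sqrt t)⁻¹ = 1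
      rw [← Real.mul_self_sqrt ht0.le]
      field_simp
      rw [Real.sqrt_sq (Real.sqrt_nonneg t)]
    rw [← h4, h5]
  have hQU : Q * U = B := by
    rw [hU, mul_add, mul_sub, mul_one, hQQ, hQB]; abel
  have hUQ : U * Q = B := by
    rw [hU, add_mul, sub_mul, one_mul, hQQ, hBQ]; abel
  set W : A := 1 - Q - Q with hW
  have hWsa : IsSelfAdjoint W := by
    rw [IsSelfAdjoint, hW]
    simp only [star_sub, star_one, hQsa]
  have hW2 : W * W = 1 := by
    have e : W * W = 1 - (Q + Q + Q + Q) + (Q * Q + Q * Q + Q * Q + Q * Q) := by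
      rw [hW]; noncomm_ring
    rw [e, hQQ]; abel
  have hWU : W * U = U * W := by
    have e1 : W * U = U - Q * U - Q * U := by rw [hW]; noncomm_ring
    have e2 : U * W = U - U * Q - U * Q := by rw [hW]; noncomm_ring
    rw [e1, e2, hQU, hUQ]
  have hWC' : W * C' = C' * W := commute_cfc_aux hUsa hWsa hW2 hWU f
  have hQC' : Q * C' = C' * Q := by
    have h1W : (1 : A) - W = Q + Q := by rw [hW]; abel
    have e1 : (Q + Q) * C' = C' * (Q + Q) := by
      rw [← h1W, sub_mul, one_mul, mul_sub, mul_one, hWC']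
    rw [add_mul, mul_add] at e1
    have e2 : (2 : ℝ) • (Q * C') = (2 : ℝ) • (C' * Q) := by
      rw [two_smul, two_smul]; exact e1
    exact smul_right_injective A two_ne_zero e2
  refine ⟨C', ?_, ?_⟩
  · rw [star_mul, hC'sa, hQsa, ← hQC']
  · calc (Q * C') * (X * P * star X) * (Q * C')
        = (Q * C') * ((X * P * star X) * Q) * C' := by noncomm_ring
      _ = (C' * Q) * ((X * P * star X) * Q) * C' := by rw [hQC']
      _ = C' * (Q * X * P * (star X * Q)) * C' := by noncomm_ring
      _ = C' * B * C' := by rw [hB, hsY, hY]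
      _ = C' * (Q * U) * C' := by rw [hQU]
      _ = (C' * Q) * U * C' := by noncomm_ring
      _ = (Q * C') * U * C' := by rw [← hQC']
      _ = Q * (C' * U * C') := by noncomm_ring
      _ = Q := by rw [hC'U, mul_one]

/-- if `p, q` are projections in a C*-algebra `D` and `‖x * p * x⋆ - q‖ < 1/2`
for some `x`, then `q` is Murray–von Neumann equivalent to a subprojection of `p`. -/
theorem stmt0 {D : Type*} [NonUnitalCStarAlgebra D] [PartialOrder D] [StarOrderedRing D]
    (p q : D) (hp_sa : IsSelfAdjoint p) (hp_idem : IsIdempotentElem p)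
    (hq_sa : IsSelfAdjoint q) (hq_idem : IsIdempotentElem q)
    (x : D) (hx : ‖x * p * star x - q‖ < 1 / 2) :
    ∃ v : D, star v * v = q ∧ v * star v ≤ p := by
  set P : Unitization ℂ D := (p : Unitization ℂ D) with hP
  set Q : Unitization ℂ D := (q : Unitization ℂ D) with hQ
  set X : Unitization ℂ D := (x : Unitization ℂ D) with hX
  have hPsa : star P = P := by rw [hP, ← Unitization.inr_star, hp_sa.star_eq]
  have hQsa : star Q = Q := by rw [hQ, ← Unitization.inr_star, hq_sa.star_eq]
  have hPP : P * P = P := by rw [hP, ← Unitization.inr_mul, hp_idem]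
  have hQQ : Q * Q = Q := by rw [hQ, ← Unitization.inr_mul, hq_idem]
  have hXn : ‖X * P * star X - Q‖ < 1 / 2 := by
    have h : X * P * star X - Q = ((x * p * star x - q : D) : Unitization ℂ D) := by
      rw [hX, hP, hQ]
      simp only [← Unitization.inr_mul, ← Unitization.inr_star, ← Unitization.inr_sub]
    rw [h, Unitization.norm_inr]; exact hx
  obtain ⟨C', hCsa, hCBC⟩ := cstar_key P Q X hPsa hPP hQsa hQQ hXn
  set C : Unitization ℂ D := Q * C' with hC
  -- C is in the image of D
  set c : D := C'.fst • q + q * C'.snd with hc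
  have hcC : (c : Unitization ℂ D) = C := by
    refine Unitization.ext ?_ ?_
    · simp [hC, hQ, Unitization.fst_mul]
    · simp [hc, hC, hQ, Unitization.snd_mul, Unitization.fst_mul]
  set v : D := p * (star x * c) with hv
  have hvA : (v : Unitization ℂ D) = P * (star X * C) := by
    rw [hv, hP, hX, ← hcC]
    simp only [← Unitization.inr_mul, ← Unitization.inr_star]
  have hVQ : star (v : Unitization ℂ D) * (v : Unitization ℂ D) = Q := by
    have hsV : star (v : Unitization ℂ D) = C * X * P := by
      rw [hvA, star_mul, star_mul, star_star, hCsa, hPsa, mul_assoc]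
    rw [hsV, hvA]
    calc C * X * P * (P * (star X * C)) = C * (X * (P * P) * star X) * C := by noncomm_ring
      _ = C * (X * P * star X) * C := by rw [hPP]
      _ = Q := hCBC
  have hvv : star v * v = q := by
    apply Unitization.inr_injective (R := ℂ)
    rw [Unitization.inr_mul, Unitization.inr_star, hVQ, hQ]
  -- now conclude inside D
  have hvq : v * q = v := by
    have h0 : star (v * q - v) * (v * q - v) = 0 := by
      have e : star (v * q - v) * (v * q - v)
          = q * (star v * v) * q - q * (star v * v) - (star v * v) * q + star v * v := by
        simp only [star_sub, star_mul, hq_sa.star_eq]; noncomm_ring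
      rw [e, hvv, hq_idem, hq_idem]
      abel
    have h1 := (CStarRing.star_mul_self_eq_zero_iff _).mp h0
    exact sub_eq_zero.mp h1
  have hpv : p * v = v := by rw [hv, ← mul_assoc, hp_idem]
  have hsvp : star v * p = star v := by rw [← hp_sa.star_eq, ← star_mul, hpv]
  have hesa : star (v * star v) = v * star v := by rw [star_mul, star_star]
  have hpe : p * (v * star v) = v * star v := by rw [← mul_assoc, hpv]
  have hep : (v * star v) * p = v * star v := by rw [mul_assoc, hsvp]
  have hee : (v * star v) * (v * star v) = v * star v := by
    calc (v * star v) * (v * star v) = v * (star v * v) * star v := by noncomm_ring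
      _ = v * q * star v := by rw [hvv]
      _ = v * star v := by rw [hvq]
  have hr : p - v * star v = star (p - v * star v) * (p - v * star v) := by
    have h1 : star (p - v * star v) = p - v * star v := by
      rw [star_sub, hp_sa.star_eq, hesa]
    rw [h1]
    have e : (p - v * star v) * (p - v * star v)
        = p * p - p * (v * star v) - (v * star v) * p + (v * star v) * (v * star v) := by
      noncomm_ring
    rw [e, hp_idem, hpe, hep, hee]
    abel
  refine ⟨v, hvv, ?_⟩
  rw [← sub_nonneg]
  calc (0 : D) ≤ star (p - v * star v) * (p - v * star v) := star_mul_self_nonneg _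
    _ = p - v * star v := hr.symm
end

section
/- Let p and q be projections in a C*-algebra A with p ≾ q (p Cuntz subequivalent to q). Then p is Murray–von Neumann equivalent to a subprojection of q; that is, there exists v ∈ A with v* v = p and v v* ≤ q. -/
/-- auxiliary function: `t ↦ t⁻¹/²` suitably truncated near zero. -/
noncomputable def auxf (t : ℝ) : ℝ := Real.sqrt t * (max t 2⁻¹)⁻¹

lemma auxf_cont : Continuous auxf := by
  refine Real.continuous_sqrt.mul (Continuous.inv₀ (continuous_id.max continuous_const) ?_)
  intro t
  exact (lt_of_lt_of_le (by norm_num) (le_max_right t 2⁻¹)).ne'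

lemma auxf_zero : auxf 0 = 0 := by simp [auxf]

lemma auxf_eq {t : ℝ} (ht : t ∈ Set.Icc (2⁻¹ : ℝ) (3 / 2)) :
    t * (auxf t * auxf t) = 1 := by
  obtain ⟨h1, _⟩ := ht
  have ht0 : (0 : ℝ) < t := lt_of_lt_of_le (by norm_num) h1
  rw [auxf, max_eq_left h1]
  field_simp
  try nlinarith [Real.mul_self_sqrt ht0.le]

/-- `t • z ≥ 0` for `t ≥ 0`, `z ≥ 0` in a C⋆-algebra. -/
lemma smul_nonneg_aux {A : Type*} [NonUnitalCStarAlgebra A] [PartialOrder A]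
    [StarOrderedRing A] {t : ℝ} (ht : 0 ≤ t) {z : A} (hz : 0 ≤ z) : 0 ≤ t • z := by
  rw [StarOrderedRing.nonneg_iff] at hz ⊢
  have key : AddSubmonoid.closure (Set.range fun s : A => star s * s) ≤
      (AddSubmonoid.closure (Set.range fun s : A => star s * s)).comap
        (DistribMulAction.toAddMonoidHom A t) := by
    rw [AddSubmonoid.closure_le]
    rintro _ ⟨s, rfl⟩
    refine AddSubmonoid.subset_closure ⟨Real.sqrt t • s, ?_⟩
    show star (Real.sqrt t • s) * (Real.sqrt t • s) = t • (star s * s)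
    rw [star_smul, star_trivial, smul_mul_smul_comm, Real.mul_self_sqrt ht]
  exact AddSubmonoid.mem_comap.mp (key hz)

/-- quasi-spectrum of an "almost unit of a corner" is contained in `{0} ∪ [1/2, 3/2]`. -/
lemma aux_spec {A : Type*} [NonUnitalCStarAlgebra A] {p a : A}
    (hpp : p * p = p) (hpa : p * a = a) (hap : a * p = a)
    (hn : ‖a - p‖ < 2⁻¹) :
    quasispectrum ℝ a ⊆ {0} ∪ Set.Icc (2⁻¹ : ℝ) (3 / 2) := by
  rw [Unitization.quasispectrum_eq_spectrum_inr' ℝ ℂ a]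
  intro lam hlam
  by_contra hmem
  simp only [Set.mem_union, Set.mem_singleton_iff, Set.mem_Icc, not_or, not_and_or,
    not_le] at hmem
  obtain ⟨hlam0, hlam1⟩ := hmem
  have habs : 2⁻¹ < |lam - 1| := by
    rcases abs_cases (lam - 1) with ⟨he, hs⟩ | ⟨he, hs⟩ <;> rcases hlam1 with h | h <;> linarith
  have hne : lam - 1 ≠ 0 := by
    intro h0
    rw [h0, abs_zero] at habs
    norm_num at habs
  set P : Unitization ℂ A := (p : Unitization ℂ A) with hPdef
  have hPP : P * P = P := by rw [hPdef, ← Unitization.inr_mul, hpp]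
  set d : Unitization ℂ A := 1 - P + (a : Unitization ℂ A) with hd
  have hd1 : d - 1 = ((a - p : A) : Unitization ℂ A) := by
    rw [hd, Unitization.inr_sub]; abel
  have hdn : ‖d - 1‖ < 2⁻¹ := by rw [hd1, Unitization.norm_inr]; exact hn
  have hPd : P * d = (a : Unitization ℂ A) := by
    rw [hd, mul_add, mul_sub, mul_one, hPP, hPdef, ← Unitization.inr_mul, hpa]
    abel
  have hdP : d * P = (a : Unitization ℂ A) := by
    rw [hd, add_mul, sub_mul, one_mul, hPP, hPdef, ← Unitization.inr_mul, hap]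
    abel
  have hcPd : P * d = d * P := by rw [hPd, hdP]
  have habs0 : (0 : ℝ) < |lam - 1| := lt_trans (by norm_num) habs
  have htn : ‖(lam - 1)⁻¹ • (d - 1)‖ < 1 := by
    rw [norm_smul, Real.norm_eq_abs, abs_inv]
    calc |lam - 1|⁻¹ * ‖d - 1‖ < |lam - 1|⁻¹ * |lam - 1| := by
          exact mul_lt_mul_of_pos_left (lt_trans hdn habs) (inv_pos.mpr habs0)
      _ = 1 := inv_mul_cancel₀ habs0.ne'
  set u0 : (Unitization ℂ A)ˣ := Units.oneSub _ htn with hu0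
  have hu0val : (u0 : Unitization ℂ A) = 1 - (lam - 1)⁻¹ • (d - 1) := rfl
  set U : Unitization ℂ A := (lam - 1) • (u0 : Unitization ℂ A) with hU
  set Uinv : Unitization ℂ A := (lam - 1)⁻¹ • ((u0⁻¹ : (Unitization ℂ A)ˣ) : Unitization ℂ A)
    with hUinv
  have hUUinv : U * Uinv = 1 := by
    rw [hU, hUinv, smul_mul_assoc, mul_smul_comm, smul_smul, mul_inv_cancel₀ hne,
      one_smul, u0.mul_inv]
  have hUinvU : Uinv * U = 1 := by
    rw [hU, hUinv, smul_mul_assoc, mul_smul_comm, smul_smul, inv_mul_cancel₀ hne,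
      one_smul, u0.inv_mul]
  have hUval : U = algebraMap ℝ (Unitization ℂ A) lam - d := by
    rw [hU, hu0val, Algebra.algebraMap_eq_smul_one, smul_sub, smul_inv_smul₀ hne]
    module
  have hPU : P * U = U * P := by
    rw [hUval, mul_sub, sub_mul, Algebra.algebraMap_eq_smul_one, mul_smul_comm,
      smul_mul_assoc, mul_one, one_mul, hcPd]
  have hPu0 : P * (u0 : Unitization ℂ A) = (u0 : Unitization ℂ A) * P := by
    have h := hPU
    rw [hU, mul_smul_comm, smul_mul_assoc] at h
    exact smul_right_injective (Unitization ℂ A) hne h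
  have hPu0c : Commute P ((u0 : (Unitization ℂ A)ˣ) : Unitization ℂ A) := hPu0
  have hPu0inv : Commute P ((u0⁻¹ : (Unitization ℂ A)ˣ) : Unitization ℂ A) :=
    hPu0c.units_inv_right
  have hPUinv : P * Uinv = Uinv * P := by
    rw [hUinv, mul_smul_comm, smul_mul_assoc, hPu0inv.eq]
  set s : Unitization ℂ A := 1 - P with hs
  have hsP : s * P = 0 := by rw [hs, sub_mul, one_mul, hPP, sub_self]
  have hPs : P * s = 0 := by rw [hs, mul_sub, mul_one, hPP, sub_self]
  have hss : s * s = s := by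
    rw [hs, mul_sub, mul_one, ← hs, hsP, sub_zero]
  have hsUinv : s * Uinv = Uinv * s := by
    rw [hs, sub_mul, mul_sub, one_mul, mul_one, hPUinv]
  have hsU : s * U = U * s := by
    rw [hs, sub_mul, mul_sub, one_mul, mul_one, hPU]
  have hlamne : lam ≠ 0 := hlam0
  have hM : algebraMap ℝ (Unitization ℂ A) lam - (a : Unitization ℂ A) = lam • s + U * P := by
    rw [hUval, sub_mul, hdP, Algebra.algebraMap_eq_smul_one, smul_mul_assoc, one_mul, hs]
    module
  set z : Unitization ℂ A := lam⁻¹ • s + Uinv * P with hz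
  have t1 : (lam • s) * (lam⁻¹ • s) = s := by
    rw [smul_mul_assoc, mul_smul_comm, smul_smul, mul_inv_cancel₀ hlamne, one_smul, hss]
  have t2 : (lam • s) * (Uinv * P) = 0 := by
    rw [smul_mul_assoc, ← mul_assoc, hsUinv, mul_assoc, hsP, mul_zero, smul_zero]
  have t3 : (U * P) * (lam⁻¹ • s) = 0 := by
    rw [mul_smul_comm, mul_assoc, hPs, mul_zero, smul_zero]
  have t4 : (U * P) * (Uinv * P) = P := by
    rw [mul_assoc U P _, ← mul_assoc P Uinv P, hPUinv, mul_assoc Uinv P P, hPP,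
      ← mul_assoc U Uinv P, hUUinv, one_mul]
  have h1 : (algebraMap ℝ (Unitization ℂ A) lam - (a : Unitization ℂ A)) * z = 1 := by
    rw [hM, hz, add_mul, mul_add, mul_add, t1, t2, t3, t4, add_zero, zero_add, hs]
    abel
  have t1' : (lam⁻¹ • s) * (lam • s) = s := by
    rw [smul_mul_assoc, mul_smul_comm, smul_smul, inv_mul_cancel₀ hlamne, one_smul, hss]
  have t2' : (lam⁻¹ • s) * (U * P) = 0 := by
    rw [smul_mul_assoc, ← mul_assoc, hsU, mul_assoc, hsP, mul_zero, smul_zero]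
  have t3' : (Uinv * P) * (lam • s) = 0 := by
    rw [mul_smul_comm, mul_assoc, hPs, mul_zero, smul_zero]
  have t4' : (Uinv * P) * (U * P) = P := by
    rw [mul_assoc Uinv P _, ← mul_assoc P U P, hPU, mul_assoc U P P, hPP,
      ← mul_assoc Uinv U P, hUinvU, one_mul]
  have h2 : z * (algebraMap ℝ (Unitization ℂ A) lam - (a : Unitization ℂ A)) = 1 := by
    rw [hM, hz, add_mul, mul_add, mul_add, t1', t2', t3', t4', add_zero, zero_add, hs]
    abel
  exact (spectrum.mem_iff.mp hlam)
    ⟨⟨algebraMap ℝ (Unitization ℂ A) lam - (a : Unitization ℂ A), z, h1, h2⟩, rfl⟩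

/-- if `p ≾ q` for projections `p, q` in a C*-algebra, then `p` is
Murray–von Neumann equivalent to a subprojection of `q`. -/
theorem stmt4 {A : Type*} [NonUnitalCStarAlgebra A] [PartialOrder A] [StarOrderedRing A]
    (p q : A) (hp_sa : IsSelfAdjoint p) (hp_idem : IsIdempotentElem p)
    (hq_sa : IsSelfAdjoint q) (hq_idem : IsIdempotentElem q)
    (h : CuntzLE p q) :
    ∃ v : A, star v * v = p ∧ v * star v ≤ q := by
  obtain ⟨x, hx⟩ := h
  obtain ⟨k, hk⟩ : ∃ k, ‖star (x k) * q * x k - p‖ < 2⁻¹ :=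
    (hx.eventually (gt_mem_nhds (by norm_num : (0:ℝ) < 2⁻¹))).exists
  set c : A := star (x k) * q * x k with hc
  set y : A := q * x k * p with hy
  set a : A := star y * y with ha
  have hq2 : ∀ z : A, q * (q * z) = q * z := fun z => by rw [← mul_assoc, hq_idem.eq]
  have hp2 : ∀ z : A, p * (p * z) = p * z := fun z => by rw [← mul_assoc, hp_idem.eq]
  have hyp : y * p = y := by simp only [hy, mul_assoc, hp_idem.eq]
  have hqy : q * y = y := by simp only [hy, mul_assoc, hq2]
  have hstary : star y = p * (star (x k) * q) := by
    rw [hy, star_mul, star_mul, hp_sa.star_eq, hq_sa.star_eq]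
  have hpa : p * a = a := by
    rw [ha, hstary]
    simp only [mul_assoc, hp2]
  have hap : a * p = a := by rw [ha, mul_assoc, hyp]
  have hacp : a = p * c * p := by
    rw [ha, hstary, hy, hc]
    simp only [mul_assoc, hq2]
  have hpnorm : ‖p‖ ≤ 1 := by
    have hn := CStarRing.norm_star_mul_self (x := p)
    rw [hp_sa.star_eq, hp_idem.eq] at hn
    nlinarith [norm_nonneg p]
  have hn : ‖a - p‖ < 2⁻¹ := by
    have heq : a - p = p * ((c - p) * p) := by
      rw [hacp]
      simp only [sub_mul, mul_sub, hp_idem.eq, mul_assoc]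
    calc ‖a - p‖ = ‖p * ((c - p) * p)‖ := by rw [heq]
      _ ≤ ‖p‖ * (‖c - p‖ * ‖p‖) :=
        le_trans (norm_mul_le _ _)
          (mul_le_mul_of_nonneg_left (norm_mul_le _ _) (norm_nonneg p))
      _ ≤ 1 * (‖c - p‖ * 1) := by
        refine mul_le_mul hpnorm ?_ (by positivity) (by norm_num)
        exact mul_le_mul_of_nonneg_left hpnorm (norm_nonneg _)
      _ = ‖c - p‖ := by ring
      _ < 2⁻¹ := hk
  have hp_nonneg : 0 ≤ p := by
    have hn0 := star_mul_self_nonneg p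
    rwa [hp_sa.star_eq, hp_idem.eq] at hn0
  have ha_sa : IsSelfAdjoint a := IsSelfAdjoint.star_mul_self y
  -- the lower bound `2⁻¹ • p ≤ a`
  have hc_sa : IsSelfAdjoint c := by
    rw [hc]
    simp only [IsSelfAdjoint, star_mul, star_star, hq_sa.star_eq, mul_assoc]
  have h_half : (2⁻¹ : ℝ) • p ≤ a := by
    have h2 := CStarAlgebra.star_left_conjugate_le_norm_smul (a := p) (b := p - c) (hp_sa.sub hc_sa)
    rw [hp_sa.star_eq, hp_idem.eq] at h2
    have h3 : p * (p - c) * p = p - a := by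
      rw [hacp, mul_sub, sub_mul]
      simp only [hp_idem.eq]
    rw [h3] at h2
    have hk' : ‖p - c‖ ≤ 2⁻¹ := by
      rw [norm_sub_rev]
      exact le_of_lt hk
    have h5 : ‖p - c‖ • p ≤ (2⁻¹ : ℝ) • p := by
      have h6 : 0 ≤ ((2⁻¹ : ℝ) - ‖p - c‖) • p := smul_nonneg_aux (by linarith) hp_nonneg
      rw [sub_smul] at h6
      exact sub_nonneg.mp h6
    have h7 : p - a ≤ (2⁻¹ : ℝ) • p := h2.trans h5
    have h8 : p - (2⁻¹ : ℝ) • p ≤ a := sub_le_comm.mp h7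
    have h9 : p - (2⁻¹ : ℝ) • p = (2⁻¹ : ℝ) • p := by module
    rwa [h9] at h8
  -- spectrum control
  have hspec : quasispectrum ℝ a ⊆ {0} ∪ Set.Icc (2⁻¹ : ℝ) (3 / 2) :=
    aux_spec hp_idem.eq hpa hap hn
  -- continuous functional calculus data
  have hF1c : ContinuousOn (fun t : ℝ => t * (auxf t * auxf t)) (quasispectrum ℝ a) :=
    (continuous_id.mul (auxf_cont.mul auxf_cont)).continuousOn
  have hF10 : (fun t : ℝ => t * (auxf t * auxf t)) 0 = 0 := by simp
  have hmc : ContinuousOn (fun t : ℝ => auxf t * auxf t) (quasispectrum ℝ a) :=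
    (auxf_cont.mul auxf_cont).continuousOn
  have hid : cfcₙ (fun t : ℝ => t) a = a := cfcₙ_id' ℝ a ha_sa
  have hm0 : (fun t : ℝ => auxf t * auxf t) 0 = 0 := by simp [auxf_zero]
  have hidc : ContinuousOn (fun t : ℝ => t) (quasispectrum ℝ a) := continuousOn_id
  have hfc : ContinuousOn auxf (quasispectrum ℝ a) := auxf_cont.continuousOn
  set e : A := cfcₙ (fun t : ℝ => t * (auxf t * auxf t)) a with he
  have he_sa : IsSelfAdjoint e := cfcₙ_predicate _ a
  have he1 : e = a * cfcₙ (fun t : ℝ => auxf t * auxf t) a := by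
    rw [he, cfcₙ_mul (fun t : ℝ => t) (fun t : ℝ => auxf t * auxf t) a hidc (by simp) hmc hm0,
      cfcₙ_id' ℝ a ha_sa]
  have he2 : e = cfcₙ (fun t : ℝ => auxf t * auxf t) a * a := by
    rw [he, cfcₙ_congr (fun t _ => mul_comm t (auxf t * auxf t)),
      cfcₙ_mul (fun t : ℝ => auxf t * auxf t) (fun t : ℝ => t) a hmc hm0 hidc (by simp),
      cfcₙ_id' ℝ a ha_sa]
  have hpe : p * e = e := by rw [he1, ← mul_assoc, hpa, ← he1]
  have hep : e * p = e := by rw [he2, mul_assoc, hap, ← he2]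
  have hval : ∀ t ∈ quasispectrum ℝ a, t ≠ 0 → t * (auxf t * auxf t) = 1 := by
    intro t ht ht0
    rcases hspec ht with h0 | hI
    · exact absurd (Set.mem_singleton_iff.mp h0) ht0
    · exact auxf_eq hI
  have he_idem : e * e = e := by
    rw [he, ← cfcₙ_mul (fun t : ℝ => t * (auxf t * auxf t))
      (fun t : ℝ => t * (auxf t * auxf t)) a hF1c hF10 hF1c hF10]
    apply cfcₙ_congr
    intro t ht
    by_cases ht0 : t = 0
    · simp [ht0]
    · simp [hval t ht ht0]
  have hea : e * a = a := by
    have hmul := cfcₙ_mul (fun t : ℝ => auxf t * auxf t) (fun t : ℝ => t) a hmc hm0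
      hidc (by simp)
    rw [hid] at hmul
    have hcg : cfcₙ (fun t : ℝ => auxf t * auxf t * t) a = e := by
      rw [he]
      apply cfcₙ_congr
      intro t ht
      show auxf t * auxf t * t = t * (auxf t * auxf t)
      ring
    have hmul2 := cfcₙ_mul (fun t : ℝ => auxf t * auxf t * t) (fun t : ℝ => t) a
      (hmc.mul hidc) (by simp) hidc (by simp)
    rw [hid, hcg] at hmul2
    calc e * a = cfcₙ (fun t : ℝ => auxf t * auxf t * t * t) a := hmul2.symm
      _ = cfcₙ (fun t : ℝ => t) a := ?_
      _ = a := hid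
    apply cfcₙ_congr
    intro t ht
    by_cases ht0 : t = 0
    · simp [ht0]
    · have hv := hval t ht ht0
      show auxf t * auxf t * t * t = t
      linear_combination t * hv
  -- prove e = p
  have hr_idem : (p - e) * (p - e) = p - e := by
    rw [sub_mul, mul_sub, mul_sub, hp_idem.eq, hpe, hep, he_idem]
    abel
  have hr_sa : IsSelfAdjoint (p - e) := hp_sa.sub he_sa
  have hr_nonneg : 0 ≤ p - e := by
    have h0 := star_mul_self_nonneg (p - e)
    rwa [hr_sa.star_eq, hr_idem] at h0
  have hra : (p - e) * a = 0 := by rw [sub_mul, hpa, hea, sub_self]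
  have hrp : (p - e) * p = p - e := by rw [sub_mul, hp_idem.eq, hep]
  have hco := star_left_conjugate_le_conjugate h_half (p - e)
  rw [hr_sa.star_eq] at hco
  have hlhs : (p - e) * ((2⁻¹ : ℝ) • p) * (p - e) = (2⁻¹ : ℝ) • (p - e) := by
    rw [mul_smul_comm, smul_mul_assoc, hrp, hr_idem]
  have hrhs : (p - e) * a * (p - e) = 0 := by rw [hra, zero_mul]
  rw [hlhs, hrhs] at hco
  have hr_nonpos : p - e ≤ 0 := by
    have h0 : 0 ≤ (2 : ℝ) • ((2⁻¹ : ℝ) • (e - p)) := by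
      refine smul_nonneg_aux (by norm_num) ?_
      have := neg_nonneg.mpr hco
      rwa [← smul_neg, neg_sub] at this
    rw [smul_smul] at h0
    rw [show (2:ℝ) * 2⁻¹ = 1 by norm_num, one_smul] at h0
    exact sub_nonpos.mpr (sub_nonneg.mp h0)
  have hr_zero : p - e = 0 := le_antisymm hr_nonpos hr_nonneg
  have hep2 : e = p := by
    have := sub_eq_zero.mp hr_zero
    exact this.symm
  -- construct v
  set b : A := cfcₙ auxf a with hb
  have hb_sa : IsSelfAdjoint b := cfcₙ_predicate _ a
  have hab : a * b = cfcₙ (fun t : ℝ => t * auxf t) a := by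
    have hmul := cfcₙ_mul (fun t : ℝ => t) auxf a hidc (by simp) hfc auxf_zero
    rw [hid] at hmul
    rw [hb]
    exact hmul.symm
  have hkey : b * (a * b) = e := by
    rw [hab, hb, ← cfcₙ_mul auxf (fun t : ℝ => t * auxf t) a hfc auxf_zero
      ((continuous_id.mul auxf_cont).continuousOn) (by simp), he]
    apply cfcₙ_congr
    intro t ht
    show auxf t * (t * auxf t) = t * (auxf t * auxf t)
    ring
  have hvv0 : star (y * b) * (y * b) = p := by
    calc star (y * b) * (y * b) = (b * star y) * (y * b) := by
          rw [star_mul, hb_sa.star_eq]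
      _ = b * (a * b) := by rw [ha, mul_assoc, ← mul_assoc (star y) y b]
      _ = p := by rw [hkey, hep2]
  refine ⟨y * b, hvv0, ?_⟩
  obtain ⟨v, hv⟩ : ∃ v, v = y * b := ⟨_, rfl⟩
  rw [← hv]
  have hvv : star v * v = p := by rw [hv]; exact hvv0
  -- v * p = v
  have hz0 : star (v - v * p) * (v - v * p) = 0 := by
    have hsv : star (v - v * p) = star v - p * star v := by
      rw [star_sub, star_mul, hp_sa.star_eq]
    have e1 : star v * (v * p) = p * p := by rw [← mul_assoc, hvv]
    have e2 : (p * star v) * v = p * p := by rw [mul_assoc, hvv]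
    have e3 : (p * star v) * (v * p) = (p * p) * p := by
      rw [← mul_assoc, mul_assoc p (star v) v, hvv]
    rw [hsv, sub_mul, mul_sub, mul_sub, hvv, e1, e2, e3]
    simp only [hp_idem.eq]
    abel
  have hvp : v * p = v := by
    have h1 := (CStarRing.star_mul_self_eq_zero_iff _).mp hz0
    have h0 := sub_eq_zero.mp h1
    exact h0.symm
  obtain ⟨w, hw⟩ : ∃ w, w = v * star v := ⟨_, rfl⟩
  have hw_sa : IsSelfAdjoint w := hw ▸ IsSelfAdjoint.mul_star_self v
  have hw_idem : w * w = w := by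
    rw [hw, mul_assoc, ← mul_assoc (star v) v (star v), hvv, ← mul_assoc, hvp]
  have hqv : q * v = v := by rw [hv, ← mul_assoc, hqy]
  have hqw : q * w = w := by rw [hw, ← mul_assoc, hqv]
  have hwq : w * q = w := by
    have h0 := congrArg star hqw
    rwa [star_mul, hw_sa.star_eq, hq_sa.star_eq] at h0
  have hfin : star (q - w) * (q - w) = q - w := by
    rw [(hq_sa.sub hw_sa).star_eq, sub_mul, mul_sub, mul_sub, hq_idem.eq, hqw, hwq, hw_idem]
    abel
  have h0 : 0 ≤ q - w := by
    have h1 := star_mul_self_nonneg (q - w)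
    rwa [hfin] at h1
  rw [← hw]
  exact sub_nonneg.mp h0
end

section
/- Let A be a C*-algebra, let p ∈ A be a projection, let a ∈ A be positive, and suppose p ≤ t a for some real number t > 0. Then there exists b ∈ A with b a b* = p; in particular p ≾ a. -/
open scoped NNReal

section Aux

variable {B : Type*} [CStarAlgebra B]

lemma isClosed_centralizer (s : Set B) : IsClosed (Set.centralizer s) := by
  have : Set.centralizer s = ⋂ g ∈ s, {z | g * z = z * g} := by
    ext z; simp [Set.mem_centralizer_iff]
  rw [this]
  exact isClosed_biInter fun g _ => isClosed_eq (by fun_prop) (by fun_prop)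

lemma commute_cfc_complex {u x : B} (hxu : Commute x u) (hxu' : Commute (star x) u)
    (g : ℂ → ℂ) : Commute x (cfc g u) := by
  refine cfc_cases (fun y => Commute x y) u g (Commute.zero_right x) fun hg hnorm => ?_
  have hmem : cfcHom hnorm ⟨_, hg.restrict⟩ ∈ StarAlgebra.elemental ℂ u := by
    rw [cfcHom_eq_of_isStarNormal]
    exact Subtype.mem _
  have hle : StarAlgebra.elemental ℂ u ≤ StarSubalgebra.centralizer ℂ {x} := by
    refine StarAlgebra.elemental.le_of_mem ?_ ?_
    · rw [StarSubalgebra.coe_centralizer]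
      exact isClosed_centralizer _
    · rw [StarSubalgebra.mem_centralizer_iff]
      rintro y rfl
      exact ⟨hxu.eq, hxu'.eq⟩
  have := hle hmem
  rw [StarSubalgebra.mem_centralizer_iff] at this
  exact (this x rfl).1

lemma commute_cfc_real {u x : B} (hu : IsSelfAdjoint u) (hxu : Commute x u)
    (hxu' : Commute (star x) u) (f : ℝ → ℝ) : Commute x (cfc f u) := by
  rw [cfc_real_eq_complex f hu]
  exact commute_cfc_complex hxu hxu' _

lemma commute_cfc_nnreal {u x : B} [PartialOrder B] [StarOrderedRing B] (hu : (0:B) ≤ u)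
    (hxu : Commute x u) (hxu' : Commute (star x) u) (f : ℝ≥0 → ℝ≥0) :
    Commute x (cfc f u) := by
  rw [cfc_nnreal_eq_real f u hu]
  exact commute_cfc_real (.of_nonneg hu) hxu hxu' _

end Aux
set_option maxHeartbeats 1000000 in
open Unitization in
theorem exists_conjugate_eq_of_projection_le_smul {A : Type*} [NonUnitalCStarAlgebra A] [PartialOrder A] [StarOrderedRing A]
    (p a : A) (hp_sa : IsSelfAdjoint p) (hp_idem : IsIdempotentElem p)
    (ha : 0 ≤ a) (t : ℝ) (ht : 0 < t) (hle : p ≤ t • a) :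
    ∃ b : A, b * a * star b = p := by
  set s : ℝ := max t 1 with hs_def
  have hs1 : (1:ℝ) ≤ s := le_max_right t 1
  have hs0 : (0:ℝ) < s := lt_of_lt_of_le one_pos hs1
  have hle' : p ≤ s • a := hle.trans (smul_le_smul_of_nonneg_right (le_max_left t 1) ha)
  set P : Unitization ℂ A := (p : Unitization ℂ A) with hP_def
  set A' : Unitization ℂ A := (a : Unitization ℂ A) with hA_def
  have hP_sa : IsSelfAdjoint P := hp_sa.inr ℂ
  have hP_idem : P * P = P := by rw [hP_def, ← inr_mul, hp_idem]
  have hA_nonneg : 0 ≤ A' := inr_nonneg_iff.mpr ha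
  have hA_sa : IsSelfAdjoint A' := .of_nonneg hA_nonneg
  have hle2 : P ≤ s • A' := by
    have h := (inr_le_iff p (s • a) hp_sa ((IsSelfAdjoint.all s).smul (.of_nonneg ha))).mpr hle'
    rwa [inr_smul] at h
  set C : Unitization ℂ A := P * A' * P with hC_def
  have hC_sa : IsSelfAdjoint C := by
    rw [hC_def, IsSelfAdjoint]
    simp only [star_mul, hP_sa.star_eq, hA_sa.star_eq, mul_assoc]
  have hC_nonneg : 0 ≤ C := by
    simpa [hP_sa.star_eq] using star_left_conjugate_nonneg hA_nonneg P
  have hPC : P * C = C := by rw [hC_def, ← mul_assoc, ← mul_assoc, hP_idem]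
  have hCP : C * P = C := by rw [hC_def, mul_assoc, mul_assoc, hP_idem, ← mul_assoc]
  have hle3 : P ≤ s • C := by
    have h := star_left_conjugate_le_conjugate hle2 P
    rwa [hP_sa.star_eq, hP_idem, hP_idem, mul_smul_comm, smul_mul_assoc, ← hC_def] at h
  set U : Unitization ℂ A := 1 - P + C with hU_def
  have hPU : P * U = C := by
    rw [hU_def, mul_add, mul_sub, mul_one, hP_idem, hPC, sub_self, zero_add]
  have hUP : U * P = C := by
    rw [hU_def, add_mul, sub_mul, one_mul, hP_idem, hCP, sub_self, zero_add]
  have hcommPU : Commute P U := by rw [Commute, SemiconjBy, hPU, hUP]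
  -- 1 - P is nonneg
  have h1P : (0:Unitization ℂ A) ≤ 1 - P := by
    have : (1 - P) * (1 - P) = 1 - P := by
      rw [sub_mul, one_mul, mul_sub, mul_one, hP_idem]; abel
    calc (0:Unitization ℂ A) ≤ star (1 - P) * (1 - P) := star_mul_self_nonneg _
      _ = 1 - P := by rw [star_sub, star_one, hP_sa.star_eq, this]
  -- s⁻¹ • 1 ≤ U
  have hsinv0 : (0:ℝ) ≤ s⁻¹ := inv_nonneg.mpr hs0.le
  have hPleC : s⁻¹ • P ≤ C := by
    have h := smul_le_smul_of_nonneg_left hle3 hsinv0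
    rwa [smul_smul, inv_mul_cancel₀ hs0.ne', one_smul] at h
  have hkey : s⁻¹ • (1:Unitization ℂ A) ≤ U := by
    have h2 : s⁻¹ • (1 - P) ≤ 1 - P := by
      have := smul_le_smul_of_nonneg_right (inv_le_one_of_one_le₀ hs1) h1P
      simpa using this
    calc s⁻¹ • (1:Unitization ℂ A) = s⁻¹ • P + s⁻¹ • (1 - P) := by
          rw [← smul_add]; congr 1; abel
      _ ≤ C + (1 - P) := add_le_add hPleC h2
      _ = U := by rw [hU_def]; abel
  have hU_nonneg : 0 ≤ U :=
    le_trans (smul_nonneg hsinv0 zero_le_one) hkey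
  have hsinv_unit : IsUnit (s⁻¹ • (1:Unitization ℂ A)) := by
    refine ⟨⟨s⁻¹ • 1, s • 1, ?_, ?_⟩, rfl⟩
    · rw [smul_mul_assoc, one_mul, smul_smul, inv_mul_cancel₀ hs0.ne', one_smul]
    · rw [smul_mul_assoc, one_mul, smul_smul, mul_inv_cancel₀ hs0.ne', one_smul]
  have hU_unit : IsUnit U :=
    CStarAlgebra.isUnit_of_le _ hkey ⟨smul_nonneg hsinv0 zero_le_one, hsinv_unit⟩
  -- V := U ^ (-1/2)
  set V : Unitization ℂ A := U ^ (-(1/2) : ℝ) with hV_def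
  have hV_nonneg : 0 ≤ V := CFC.rpow_nonneg
  have hV_sa : IsSelfAdjoint V := .of_nonneg hV_nonneg
  have hVUV : V * U * V = 1 := CFC.conjugate_rpow_neg_one_half U ⟨hU_nonneg, hU_unit⟩
  have hcommPV : Commute P V := by
    have : V = cfc (fun x : ℝ≥0 => x ^ (-(1/2) : ℝ)) U := rfl
    rw [this]
    exact commute_cfc_nnreal hU_nonneg hcommPU (by rwa [hP_sa.star_eq]) _
  -- the candidate in the unitization
  have hVP_fst : (V * P).fst = 0 := by
    rw [Unitization.fst_mul, hP_def, Unitization.fst_inr, mul_zero]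
  set b : A := (V * P).snd with hb_def
  have hVP : V * P = (b : Unitization ℂ A) := by
    have h := Unitization.inl_fst_add_inr_snd_eq (V * P)
    rw [hVP_fst, Unitization.inl_zero, zero_add] at h
    exact h.symm
  have hmain : (V * P) * A' * star (V * P) = P := by
    rw [star_mul, hV_sa.star_eq, hP_sa.star_eq]
    calc V * P * A' * (P * V) = V * (P * A' * P) * V := by
          simp only [mul_assoc]
      _ = V * (U * P) * V := by rw [← hC_def, hUP]
      _ = (V * U) * (P * V) := by simp only [mul_assoc]
      _ = (V * U) * (V * P) := by rw [hcommPV.eq]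
      _ = (V * U * V) * P := by simp only [mul_assoc]
      _ = P := by rw [hVUV, one_mul]
  refine ⟨b, ?_⟩
  have : ((b * a * star b : A) : Unitization ℂ A) = ((p : A) : Unitization ℂ A) := by
    rw [inr_mul, inr_mul, inr_star, ← hVP, ← hA_def, hmain, hP_def]
  exact inr_injective this


/-- if a projection `p` satisfies `p ≤ t • a` for some `t > 0` and some
positive `a`, then `p = b a b⋆` for some `b`; in particular `p ≾ a`. -/
theorem stmt11 {A : Type*} [NonUnitalCStarAlgebra A] [PartialOrder A] [StarOrderedRing A]
    (p a : A) (hp_sa : IsSelfAdjoint p) (hp_idem : IsIdempotentElem p)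
    (ha : 0 ≤ a) (t : ℝ) (ht : 0 < t) (hle : p ≤ t • a) :
    (∃ b : A, b * a * star b = p) ∧ CuntzLE p a := by
  obtain ⟨b, hb⟩ := exists_conjugate_eq_of_projection_le_smul p a hp_sa hp_idem ha t ht hle
  refine ⟨⟨b, hb⟩, ⟨fun _ => star b, ?_⟩⟩
  have : (fun k : ℕ => ‖star (star b) * a * star b - p‖) = fun _ => 0 := by
    funext k
    rw [star_star, hb, sub_self, norm_zero]
  rw [this]
  exact tendsto_const_nhds
end

section
/- Let X be a compact Hausdorff space, U ⊆ X an open subset, and Y ⊆ U a closed subset of X. Let ρ : U → Y be a continuous map with ρ(y) = y for all y ∈ Y, and let f : X → [0,1] be continuous with f(y) = 1 for all y ∈ Y and f(x) = 0 for all x ∉ U. Fix m ∈ ℕ and positive elements p, q ∈ C(Y, M_m(ℂ)). Let P, Q ∈ C(X, M_m(ℂ)) be the continuous maps defined by P(x) = f(x)·p(ρ(x)) for x ∈ U and P(x) = 0 for x ∉ U, and Q(x) = f(x)·q(ρ(x)) for x ∈ U and Q(x) = 0 for x ∉ U. Then P and Q are positive, and P ≾ Q in C(X, M_m(ℂ))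 if and only if p ≾ q in C(Y, M_m(ℂ)). -/
open scoped Matrix.Norms.L2Operator ComplexOrder

lemma posSemidef_real_smul {n : Type*} [Fintype n] {c : ℝ} (hc : 0 ≤ c)
    {A : Matrix n n ℂ} (hA : A.PosSemidef) : (c • A).PosSemidef := by
  have h : c • A = (c : ℂ) • A := by ext i j; simp [Complex.real_smul]
  rw [h]
  constructor
  · rw [Matrix.IsHermitian, Matrix.conjTranspose_smul, hA.1.eq]; congr 1; simp
  · exact (hA.smul (a := (c : ℂ)) (by exact_mod_cast hc)).2

lemma extend_smul_exists {X : Type*} [TopologicalSpace X] {M : Type*}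
    [NormedAddCommGroup M] [NormedSpace ℝ M] {U : Set X} (hU : IsOpen U)
    (h : C(X, ℝ)) (hh0 : ∀ x ∉ U, h x = 0) (v : C(U, M)) (C : ℝ) (hC0 : 0 ≤ C)
    (hC : ∀ u : U, ‖v u‖ ≤ C) :
    ∃ F : C(X, M), (∀ (x : X) (hx : x ∈ U), F x = h x • v ⟨x, hx⟩) ∧
      ∀ x ∉ U, F x = 0 := by
  classical
  set F : X → M := fun x => if hx : x ∈ U then h x • v ⟨x, hx⟩ else 0 with hF
  have hbound : ∀ x, ‖F x‖ ≤ |h x| * C := by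
    intro x
    by_cases hx : x ∈ U
    · simp only [hF, dif_pos hx, norm_smul, Real.norm_eq_abs]
      exact mul_le_mul_of_nonneg_left (hC _) (abs_nonneg _)
    · simp only [hF, dif_neg hx, norm_zero]
      positivity
  have hcont : Continuous F := by
    rw [continuous_iff_continuousAt]
    intro x
    by_cases hx : x ∈ U
    · have hrestr : ContinuousOn F U := by
        rw [continuousOn_iff_continuous_restrict]
        have he : U.domRestrict F = fun u : U => h u • v u := by
          funext u
          simp only [hF, Set.domRestrict_apply, dif_pos u.2]
        rw [he]
        exact (h.continuous.comp continuous_subtype_val).smul v.continuous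
      exact hrestr.continuousAt (hU.mem_nhds hx)
    · have hx0 : F x = 0 := by simp [hF, dif_neg hx]
      rw [ContinuousAt, hx0]
      apply squeeze_zero_norm hbound
      have ht : Filter.Tendsto (fun x' => |h x'| * C) (nhds x) (nhds (|h x| * C)) :=
        ((h.continuous.abs).mul continuous_const).tendsto x
      simpa [hh0 x hx] using ht
  exact ⟨⟨F, hcont⟩, fun x hx => by simp [hF, dif_pos hx],
    fun x hx => by simp [hF, dif_neg hx]⟩

/-- pulling back positive matrix-valued functions on a closed set `Y`
via a retraction `ρ : U → Y` and cutting down by a function `f` vanishing off `U` and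
equal to `1` on `Y` yields positive elements `P, Q` with `P ≾ Q` iff `p ≾ q`. -/
theorem stmt13 {X : Type*} [TopologicalSpace X] [CompactSpace X] [T2Space X]
    (U Y : Set X) (hU : IsOpen U) (hY : IsClosed Y) (hYU : Y ⊆ U)
    (ρ : C(U, Y)) (hρ : ∀ (y : X) (hy : y ∈ Y), (ρ ⟨y, hYU hy⟩ : X) = y)
    (f : C(X, ℝ)) (hf01 : ∀ x, f x ∈ Set.Icc (0 : ℝ) 1)
    (hf1 : ∀ y ∈ Y, f y = 1) (hf0 : ∀ x ∉ U, f x = 0)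
    (m : ℕ) (p q : C(Y, Matrix (Fin m) (Fin m) ℂ))
    (hp : ∀ y, (p y).PosSemidef) (hq : ∀ y, (q y).PosSemidef)
    (P Q : C(X, Matrix (Fin m) (Fin m) ℂ))
    (hPU : ∀ (x : X) (hx : x ∈ U), P x = f x • p (ρ ⟨x, hx⟩))
    (hP0 : ∀ x ∉ U, P x = 0)
    (hQU : ∀ (x : X) (hx : x ∈ U), Q x = f x • q (ρ ⟨x, hx⟩))
    (hQ0 : ∀ x ∉ U, Q x = 0) :
    haveI : CompactSpace Y := isCompact_iff_compactSpace.mp hY.isCompact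
    (∀ x, (P x).PosSemidef) ∧ (∀ x, (Q x).PosSemidef) ∧
      (CuntzLE P Q ↔ CuntzLE p q) := by
  haveI : CompactSpace Y := isCompact_iff_compactSpace.mp hY.isCompact
  have hPpos : ∀ x, (P x).PosSemidef := by
    intro x
    by_cases hx : x ∈ U
    · rw [hPU x hx]; exact posSemidef_real_smul (hf01 x).1 (hp _)
    · rw [hP0 x hx]; exact Matrix.PosSemidef.zero
  have hQpos : ∀ x, (Q x).PosSemidef := by
    intro x
    by_cases hx : x ∈ U
    · rw [hQU x hx]; exact posSemidef_real_smul (hf01 x).1 (hq _)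
    · rw [hQ0 x hx]; exact Matrix.PosSemidef.zero
  have hPy : ∀ y : Y, P (y : X) = p y := by
    intro y
    rw [hPU _ (hYU y.2), hf1 _ y.2, one_smul]
    congr 1
    exact Subtype.ext (hρ _ y.2)
  have hQy : ∀ y : Y, Q (y : X) = q y := by
    intro y
    rw [hQU _ (hYU y.2), hf1 _ y.2, one_smul]
    congr 1
    exact Subtype.ext (hρ _ y.2)
  refine ⟨hPpos, hQpos, ?_, ?_⟩
  · -- forward direction
    rintro ⟨x, hx⟩
    refine ⟨fun k => (x k).restrict Y, ?_⟩
    have key : ∀ k, ‖star ((x k).restrict Y) * q * (x k).restrict Y - p‖ ≤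
        ‖star (x k) * Q * x k - P‖ := by
      intro k
      rw [ContinuousMap.norm_le _ (norm_nonneg _)]
      intro y
      have : (star ((x k).restrict Y) * q * (x k).restrict Y - p) y =
          (star (x k) * Q * x k - P) (y : X) := by
        simp [hPy y, hQy y]
      rw [this]
      exact ContinuousMap.norm_coe_le_norm _ _
    exact squeeze_zero (fun k => norm_nonneg _) key hx
  · -- backward direction
    rintro ⟨x, hx⟩
    have hg : ∀ k : ℕ, ∃ g : C(X, ℝ), (∀ z, g z = min 1 ((k + 1 : ℝ) * f z)) :=
      fun k => ⟨⟨fun z => min 1 ((k + 1 : ℝ) * f z),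
        continuous_const.min (continuous_const.mul f.continuous)⟩, fun z => rfl⟩
    choose g hgdef using hg
    have hF : ∀ k : ℕ, ∃ F : C(X, Matrix (Fin m) (Fin m) ℂ),
        (∀ (z : X) (hz : z ∈ U), F z = g k z • (x k) (ρ ⟨z, hz⟩)) ∧
        ∀ z ∉ U, F z = 0 := by
      intro k
      obtain ⟨F, h1, h2⟩ := extend_smul_exists hU (g k)
        (fun z hz => by rw [hgdef k z, hf0 z hz, mul_zero]; exact min_eq_right zero_le_one)
        ((x k).comp ρ) ‖x k‖ (norm_nonneg _)
        (fun u => by simpa using ContinuousMap.norm_coe_le_norm (x k) (ρ u))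
      exact ⟨F, fun z hz => h1 z hz, h2⟩
    choose F hFU hF0 using hF
    refine ⟨F, ?_⟩
    have bound : ∀ k, ‖star (F k) * Q * F k - P‖ ≤
        ‖star (x k) * q * x k - p‖ + ‖p‖ * (1 / (k + 1 : ℝ)) := by
      intro k
      rw [ContinuousMap.norm_le _ (by positivity)]
      intro z
      by_cases hz : z ∈ U
      · set y := ρ ⟨z, hz⟩ with hy
        have hfz0 := (hf01 z).1
        have hfz1 := (hf01 z).2
        have hgz0 : 0 ≤ g k z := by
          rw [hgdef]
          exact le_min zero_le_one (by positivity)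
        have hgz1 : g k z ≤ 1 := by rw [hgdef]; exact min_le_left _ _
        have hval : (star (F k) * Q * F k - P) z =
            (g k z * (f z * g k z)) • (star (x k y) * q y * x k y - p y) +
              ((g k z * g k z - 1) * f z) • p y := by
          simp only [ContinuousMap.sub_apply, ContinuousMap.mul_apply,
            ContinuousMap.star_apply, hFU k z hz, hQU z hz, hPU z hz, ← hy,
            star_smul, star_trivial, smul_mul_assoc, mul_smul_comm, smul_smul]
          module
        have hEw : ‖star (x k y) * q y * x k y - p y‖ ≤ ‖star (x k) * q * x k - p‖ := by
          have : star (x k y) * q y * x k y - p y = (star (x k) * q * x k - p) y := by simp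
          rw [this]
          exact ContinuousMap.norm_coe_le_norm _ _
        have hwp : ‖p y‖ ≤ ‖p‖ := ContinuousMap.norm_coe_le_norm _ _
        have h1 : |g k z * (f z * g k z)| ≤ 1 := by
          rw [abs_of_nonneg (by positivity)]
          nlinarith
        have h2 : |(g k z * g k z - 1) * f z| ≤ 1 / (k + 1 : ℝ) := by
          rcases le_total 1 ((k + 1 : ℝ) * f z) with h | h
          · have hgz : g k z = 1 := by rw [hgdef]; exact min_eq_left h
            rw [hgz]
            simp
            positivity
          · have hfz : f z ≤ 1 / (k + 1 : ℝ) := by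
              rw [le_div_iff₀ (by positivity)]
              nlinarith
            have habs : |(g k z * g k z - 1) * f z| = (1 - g k z * g k z) * f z := by
              rw [abs_mul, abs_of_nonneg hfz0, abs_of_nonpos (by nlinarith)]
              ring
            rw [habs]
            nlinarith
        calc ‖(star (F k) * Q * F k - P) z‖
            ≤ ‖(g k z * (f z * g k z)) • (star (x k y) * q y * x k y - p y)‖ +
              ‖((g k z * g k z - 1) * f z) • p y‖ := by rw [hval]; exact norm_add_le _ _
          _ = |g k z * (f z * g k z)| * ‖star (x k y) * q y * x k y - p y‖ +
              |(g k z * g k z - 1) * f z| * ‖p y‖ := by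
                rw [norm_smul, norm_smul, Real.norm_eq_abs, Real.norm_eq_abs]
          _ ≤ 1 * ‖star (x k) * q * x k - p‖ + (1 / (k + 1 : ℝ)) * ‖p‖ :=
                add_le_add (mul_le_mul h1 hEw (norm_nonneg _) zero_le_one)
                  (mul_le_mul h2 hwp (norm_nonneg _) (by positivity))
          _ = ‖star (x k) * q * x k - p‖ + ‖p‖ * (1 / (k + 1 : ℝ)) := by ring
      · have : (star (F k) * Q * F k - P) z = 0 := by
          simp [ContinuousMap.sub_apply, ContinuousMap.mul_apply, hF0 k z hz, hP0 z hz]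
        rw [this, norm_zero]
        positivity
    refine squeeze_zero (fun k => norm_nonneg _) bound ?_
    have h2 : Filter.Tendsto (fun k : ℕ => ‖p‖ * (1 / (k + 1 : ℝ)))
        Filter.atTop (nhds 0) := by
      have := tendsto_one_div_add_atTop_nhds_zero_nat.const_mul ‖p‖
      simpa using this
    simpa using hx.add h2
end

section
/- Let n_1, …, n_k be natural numbers, let Y = S^{n_1} × ⋯ × S^{n_k} be the product of the unit spheres S^{n_i} ⊆ ℝ^{n_i + 1}, and set N = k + (n_1 + ⋯ + n_k). Then for every m ∈ ℕ there exists a map ι from the set of projections of C(Y, M_m(ℂ)) to the set of positive elements of C([0,1]^N, M_m(ℂ)) such that for all projections p, q ∈ C(Y, M_m(ℂ)): ι(p) ≾ ι(q) in C([0,1]^N, M_m(ℂ)) if and only if p ≾ q in C(Y, M_m(ℂ)). In particular ι induces an order embedding of the Murray–von Neumann comparison classes of projections over Y into the Cuntz classes of positive elements over [0,1]^N. -/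
open scoped Matrix.Norms.L2Operator ComplexOrder

set_option synthInstance.maxHeartbeats 1000000
set_option maxHeartbeats 4000000
namespace Stmt14Proof

noncomputable section

variable {k : ℕ} (n : Fin k → ℕ)

abbrev Ysp := (i : Fin k) → Metric.sphere (0 : EuclideanSpace ℝ (Fin (n i + 1))) 1
abbrev Tsp := Fin (k + ∑ i, n i) → Set.Icc (0 : ℝ) 1

def σe : (Σ i : Fin k, Fin (n i + 1)) ≃ Fin (k + ∑ i, n i) :=
  Fintype.equivFinOfCardEq (by
    simp [Fintype.card_sigma, Finset.sum_add_distrib, add_comm])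

def uu (t : Tsp n) (i : Fin k) : EuclideanSpace ℝ (Fin (n i + 1)) :=
  (EuclideanSpace.equiv (Fin (n i + 1)) ℝ).symm fun j => 4 * (t (σe n ⟨i, j⟩) : ℝ) - 2

lemma uu_apply (t : Tsp n) (i : Fin k) (j : Fin (n i + 1)) :
    uu n t i j = 4 * (t (σe n ⟨i, j⟩) : ℝ) - 2 := rfl

lemma continuous_uu (i : Fin k) : Continuous fun t : Tsp n => uu n t i := by
  refine (EuclideanSpace.equiv (Fin (n i + 1)) ℝ).symm.continuous.comp ?_
  refine continuous_pi fun j => ?_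
  have : Continuous fun t : Tsp n => (t (σe n ⟨i, j⟩) : ℝ) :=
    continuous_subtype_val.comp (continuous_apply _)
  continuity

def ff (t : Tsp n) : ℝ := ∏ i, min 1 ‖uu n t i‖

lemma ff_nonneg (t : Tsp n) : 0 ≤ ff n t :=
  Finset.prod_nonneg fun i _ => le_min zero_le_one (norm_nonneg _)

lemma ff_le_one (t : Tsp n) : ff n t ≤ 1 :=
  Finset.prod_le_one (fun i _ => le_min zero_le_one (norm_nonneg _))
    (fun i _ => min_le_left _ _)

lemma continuous_ff : Continuous (ff n) := by
  refine continuous_finset_prod _ fun i _ => ?_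
  exact continuous_const.min (continuous_uu n i).norm

lemma ff_eq_zero (t : Tsp n) (i : Fin k) (h : uu n t i = 0) : ff n t = 0 := by
  refine Finset.prod_eq_zero (Finset.mem_univ i) ?_
  simp [h]

lemma coord_abs_le_norm {d : ℕ} (v : EuclideanSpace ℝ (Fin d)) (j : Fin d) : |v j| ≤ ‖v‖ := by
  rw [EuclideanSpace.norm_eq]
  calc |v j| = Real.sqrt (‖v j‖ ^ 2) := by
        rw [Real.norm_eq_abs, sq_abs, Real.sqrt_sq_eq_abs]
    _ ≤ _ := Real.sqrt_le_sqrt (Finset.single_le_sum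
        (fun i _ => sq_nonneg ‖v i‖) (Finset.mem_univ j))

def spt (i : Fin k) : Metric.sphere (0 : EuclideanSpace ℝ (Fin (n i + 1))) 1 :=
  ⟨EuclideanSpace.single 0 1, by simp [mem_sphere_zero_iff_norm]⟩

open scoped Classical in
def rho (t : Tsp n) : Ysp n := fun i =>
  if h : uu n t i = 0 then spt n i
  else ⟨‖uu n t i‖⁻¹ • uu n t i, by
    rw [mem_sphere_zero_iff_norm, norm_smul, norm_inv, norm_norm]
    exact inv_mul_cancel₀ (norm_ne_zero_iff.mpr h)⟩

def emb (y : Ysp n) : Tsp n := fun a =>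
  ⟨((y ((σe n).symm a).1 : EuclideanSpace ℝ _) ((σe n).symm a).2 + 2) / 4, by
    have h := coord_abs_le_norm (y ((σe n).symm a).1 : EuclideanSpace ℝ _) ((σe n).symm a).2
    have h2 : ‖(y ((σe n).symm a).1 : EuclideanSpace ℝ (Fin (n ((σe n).symm a).1 + 1)))‖ = 1 :=
      by have := (y ((σe n).symm a).1).2; rwa [mem_sphere_zero_iff_norm] at this
    rw [h2] at h
    rw [abs_le] at h
    constructor <;> [linarith [h.1]; linarith [h.2]]⟩

lemma uu_emb (y : Ysp n) (i : Fin k) : uu n (emb n y) i = (y i : EuclideanSpace ℝ _) := by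
  ext j
  rw [uu_apply]
  show 4 * ((((y ((σe n).symm (σe n ⟨i, j⟩)).1 : EuclideanSpace ℝ _)
      ((σe n).symm (σe n ⟨i, j⟩)).2) + 2) / 4) - 2 = _
  rw [Equiv.symm_apply_apply]
  ring

lemma ff_emb (y : Ysp n) : ff n (emb n y) = 1 := by
  unfold ff
  rw [Finset.prod_eq_one]
  intro i _
  rw [uu_emb, mem_sphere_zero_iff_norm.mp (y i).2]
  simp

lemma rho_emb (y : Ysp n) : rho n (emb n y) = y := by
  funext i
  have h1 : uu n (emb n y) i = (y i : EuclideanSpace ℝ _) := uu_emb n y i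
  have h2 : uu n (emb n y) i ≠ 0 := by
    rw [h1]
    intro h
    have := mem_sphere_zero_iff_norm.mp (y i).2
    rw [h] at this; simp at this
  have h3 := mem_sphere_zero_iff_norm.mp (y i).2
  simp only [rho, dif_neg h2]
  ext1
  simp only [h1, h3, inv_one, one_smul]

open Filter Topology in
lemma continuous_weighted {m : ℕ} (w : Tsp n → ℝ) (hw : Continuous w)
    (hw0 : ∀ t i, uu n t i = 0 → w t = 0) (g : C(Ysp n, Matrix (Fin m) (Fin m) ℂ)) :
    Continuous fun t => (w t : ℂ) • g (rho n t) := by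
  rw [continuous_iff_continuousAt]
  intro t₀
  by_cases h : ∀ i, uu n t₀ i ≠ 0
  · have hopen : IsOpen {t : Tsp n | ∀ i, uu n t i ≠ 0} := by
      have he : {t : Tsp n | ∀ i, uu n t i ≠ 0} = ⋂ i, (fun t => uu n t i) ⁻¹' {0}ᶜ := by
        ext t; simp [Set.mem_iInter]
      rw [he]
      exact isOpen_iInter_of_finite fun i =>
        (isOpen_compl_singleton).preimage (continuous_uu n i)
    have hmem : {t : Tsp n | ∀ i, uu n t i ≠ 0} ∈ 𝓝 t₀ := hopen.mem_nhds h
    have hrho : ContinuousAt (rho n) t₀ := by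
      rw [continuousAt_pi]
      intro i
      rw [Topology.IsInducing.continuousAt_iff Topology.IsInducing.subtypeVal]
      have heq : (fun t => ((rho n t i : EuclideanSpace ℝ (Fin (n i + 1)))))
          =ᶠ[𝓝 t₀] fun t => ‖uu n t i‖⁻¹ • uu n t i := by
        filter_upwards [hmem] with t ht
        simp only [rho, dif_neg (ht i)]
      refine ContinuousAt.congr ?_ heq.symm
      exact (((continuous_uu n i).norm.continuousAt).inv₀
        (norm_ne_zero_iff.mpr (h i))).smul (continuous_uu n i).continuousAt
    exact ((Complex.continuous_ofReal.comp hw).continuousAt).smul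
      ((g.continuous.continuousAt).comp hrho)
  · push_neg at h
    obtain ⟨i, hi⟩ := h
    have hval : ((w t₀ : ℂ)) • g (rho n t₀) = 0 := by
      rw [hw0 t₀ i hi]; simp
    rw [ContinuousAt, hval]
    refine squeeze_zero_norm (f := fun t => (w t : ℂ) • g (rho n t))
      (a := fun t => |w t| * ‖g‖) ?_ ?_
    · intro t
      rw [norm_smul, Complex.norm_real, Real.norm_eq_abs]
      exact mul_le_mul_of_nonneg_left (g.norm_coe_le_norm _) (abs_nonneg _)
    · have ht : Tendsto (fun t => |w t| * ‖g‖) (𝓝 t₀) (𝓝 (|w t₀| * ‖g‖)) :=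
        ((hw.abs).continuousAt).mul tendsto_const_nhds
      have : |w t₀| * ‖g‖ = 0 := by rw [hw0 t₀ i hi]; simp
      rwa [this] at ht

open Matrix in
lemma posSemidef_real_smul {m : ℕ} {c : ℝ} (hc : 0 ≤ c) {A : Matrix (Fin m) (Fin m) ℂ}
    (hA : A.PosSemidef) : ((c : ℂ) • A).PosSemidef := by
  constructor
  · have hst : star (c : ℂ) = (c : ℂ) := by
      simp [Complex.star_def, Complex.conj_ofReal]
    unfold Matrix.IsHermitian
    rw [conjTranspose_smul, hst, hA.1]
  · intro x
    have hsum : (x.sum fun i xi => x.sum fun j xj => star xi * ((c : ℂ) • A) i j * xj)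
        = (c : ℂ) * x.sum fun i xi => x.sum fun j xj => star xi * A i j * xj := by
      simp only [Finsupp.sum, Finset.mul_sum, Matrix.smul_apply, smul_eq_mul]
      exact Finset.sum_congr rfl fun i _ => Finset.sum_congr rfl fun j _ => by ring
    rw [hsum]
    exact mul_nonneg (by exact_mod_cast hc) (hA.2 x)

open Matrix in
lemma proj_pointwise {m : ℕ} {X : Type*} [TopologicalSpace X]
    (p : C(X, Matrix (Fin m) (Fin m) ℂ)) (h1 : IsSelfAdjoint p) (h2 : IsIdempotentElem p)
    (y : X) : (p y).PosSemidef := by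
  have h4 : (p y)ᴴ = p y := by
    have := congrArg (fun f : C(X, Matrix (Fin m) (Fin m) ℂ) => f y) h1
    simpa [Matrix.star_eq_conjTranspose] using this
  have h3 : p y = (p y)ᴴ * (p y) := by
    rw [h4]
    conv_lhs => rw [← h2]
    rfl
  rw [h3]
  exact posSemidef_conjTranspose_mul_self _

variable {m : ℕ}

def iotaC (p : C(Ysp n, Matrix (Fin m) (Fin m) ℂ)) : C(Tsp n, Matrix (Fin m) (Fin m) ℂ) :=
  ⟨fun t => ((ff n t : ℝ) : ℂ) • p (rho n t),
   continuous_weighted n (ff n) (continuous_ff n) (ff_eq_zero n) p⟩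

lemma iotaC_apply (p : C(Ysp n, Matrix (Fin m) (Fin m) ℂ)) (t : Tsp n) :
    iotaC n p t = ((ff n t : ℝ) : ℂ) • p (rho n t) := rfl

lemma iotaC_pos (p : C(Ysp n, Matrix (Fin m) (Fin m) ℂ))
    (h1 : IsSelfAdjoint p) (h2 : IsIdempotentElem p) (t : Tsp n) :
    ((iotaC n p) t).PosSemidef := by
  rw [iotaC_apply]
  exact posSemidef_real_smul (ff_nonneg n t) (proj_pointwise p h1 h2 _)

lemma continuous_emb : Continuous (emb n) := by
  refine continuous_pi fun a => Continuous.subtype_mk ?_ _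
  have h1 : Continuous fun y : Ysp n =>
      (y ((σe n).symm a).1 : EuclideanSpace ℝ (Fin (n ((σe n).symm a).1 + 1))) :=
    continuous_subtype_val.comp (continuous_apply _)
  have h2 : Continuous fun y : Ysp n =>
      (y ((σe n).symm a).1 : EuclideanSpace ℝ (Fin (n ((σe n).symm a).1 + 1)))
        ((σe n).symm a).2 :=
    (PiLp.proj (𝕜 := ℝ) 2 _ ((σe n).symm a).2).continuous.comp h1
  continuity

def embC : C(Ysp n, Tsp n) := ⟨emb n, continuous_emb n⟩

lemma iotaC_emb (p : C(Ysp n, Matrix (Fin m) (Fin m) ℂ)) (z : Ysp n) :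
    iotaC n p (emb n z) = p z := by
  rw [iotaC_apply, ff_emb, rho_emb]
  simp

lemma norm_real_smul (c : ℝ) (A : Matrix (Fin m) (Fin m) ℂ) : ‖(c : ℂ) • A‖ = |c| * ‖A‖ := by
  rw [norm_smul, Complex.norm_real, Real.norm_eq_abs]

open Matrix in
lemma norm_conj_bound (A B : Matrix (Fin m) (Fin m) ℂ) : ‖star A * B * A‖ ≤ ‖A‖ ^ 2 * ‖B‖ := by
  calc ‖star A * B * A‖ ≤ ‖star A * B‖ * ‖A‖ := Matrix.l2_opNorm_mul _ _
    _ ≤ (‖star A‖ * ‖B‖) * ‖A‖ :=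
      mul_le_mul_of_nonneg_right (Matrix.l2_opNorm_mul _ _) (norm_nonneg _)
    _ = ‖A‖ ^ 2 * ‖B‖ := by
      rw [star_eq_conjTranspose, Matrix.l2_opNorm_conjTranspose]; ring

open Filter in
lemma cuntz_reflect (p q : C(Ysp n, Matrix (Fin m) (Fin m) ℂ))
    (h : CuntzLE (iotaC n p) (iotaC n q)) : CuntzLE p q := by
  obtain ⟨y, hy⟩ := h
  refine ⟨fun j => (y j).comp (embC n), ?_⟩
  refine squeeze_zero (fun j => norm_nonneg _) (fun j => ?_) hy
  refine (ContinuousMap.norm_le _ (norm_nonneg _)).mpr fun z => ?_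
  have hpt : (star ((y j).comp (embC n)) * q * ((y j).comp (embC n)) - p) z
      = (star (y j) * iotaC n q * (y j) - iotaC n p) (emb n z) := by
    simp only [ContinuousMap.sub_apply, ContinuousMap.mul_apply, ContinuousMap.star_apply,
      ContinuousMap.comp_apply, embC, ContinuousMap.coe_mk, iotaC_emb]
  rw [hpt]
  exact ContinuousMap.norm_coe_le_norm _ _

open Filter in
lemma cuntz_preserve (p q : C(Ysp n, Matrix (Fin m) (Fin m) ℂ)) (h : CuntzLE p q) :
    CuntzLE (iotaC n p) (iotaC n q) := by
  obtain ⟨x, hx⟩ := h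
  set C : ℕ → ℝ := fun j => ‖x j‖ ^ 2 * ‖q‖ + ‖p‖ + 1 with hC
  have hCpos : ∀ j, 0 < C j := fun j => by positivity
  set δ : ℕ → ℝ := fun j => (1 / ((j : ℝ) + 1)) / C j with hδ
  have hδpos : ∀ j, 0 < δ j := fun j => div_pos (by positivity) (hCpos j)
  set w : ℕ → Tsp n → ℝ := fun j t => min 1 (ff n t / δ j) with hwdef
  have hwcont : ∀ j, Continuous (w j) := fun j =>
    continuous_const.min ((continuous_ff n).div_const _)
  have hw0 : ∀ j t i, uu n t i = 0 → w j t = 0 := by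
    intro j t i hu
    simp [hwdef, ff_eq_zero n t i hu]
  have hw01 : ∀ j t, 0 ≤ w j t ∧ w j t ≤ 1 := fun j t =>
    ⟨le_min zero_le_one (div_nonneg (ff_nonneg n t) (hδpos j).le), min_le_left _ _⟩
  set Y : ℕ → C(Tsp n, Matrix (Fin m) (Fin m) ℂ) :=
    fun j => ⟨fun t => (w j t : ℂ) • x j (rho n t),
      continuous_weighted n (w j) (hwcont j) (hw0 j) (x j)⟩ with hY
  refine ⟨Y, ?_⟩
  have key : ∀ j, ‖star (Y j) * iotaC n q * Y j - iotaC n p‖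
      ≤ ‖star (x j) * q * x j - p‖ + 1 / ((j : ℝ) + 1) := by
    intro j
    refine (ContinuousMap.norm_le _ (by positivity)).mpr fun t => ?_
    have hpt : (star (Y j) * iotaC n q * Y j - iotaC n p) t
        = ((w j t ^ 2 * ff n t : ℝ) : ℂ) • (star (x j (rho n t)) * q (rho n t) * x j (rho n t))
          - ((ff n t : ℝ) : ℂ) • p (rho n t) := by
      simp only [hY, ContinuousMap.sub_apply, ContinuousMap.mul_apply, ContinuousMap.star_apply,
        ContinuousMap.coe_mk, iotaC_apply, star_smul, Complex.star_def, Complex.conj_ofReal,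
        smul_mul_assoc, mul_smul_comm, smul_smul]
      congr 2
      push_cast
      ring
    rw [hpt]
    rcases le_or_gt (δ j) (ff n t) with hge | hlt
    · have hw1 : w j t = 1 := min_eq_left ((one_le_div (hδpos j)).mpr hge)
      rw [hw1]
      have : ((1 : ℝ) ^ 2 * ff n t : ℝ) = ff n t := by ring
      rw [this, ← smul_sub]
      have heval : star (x j (rho n t)) * q (rho n t) * x j (rho n t) - p (rho n t)
          = (star (x j) * q * x j - p) (rho n t) := by
        simp [ContinuousMap.mul_apply]
      rw [heval, norm_real_smul]
      have h1 : |ff n t| ≤ 1 := by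
        rw [abs_of_nonneg (ff_nonneg n t)]; exact ff_le_one n t
      calc |ff n t| * ‖(star (x j) * q * x j - p) (rho n t)‖
          ≤ 1 * ‖star (x j) * q * x j - p‖ :=
            mul_le_mul h1 (ContinuousMap.norm_coe_le_norm _ _) (norm_nonneg _) zero_le_one
        _ ≤ ‖star (x j) * q * x j - p‖ + 1 / ((j : ℝ) + 1) := by
            rw [one_mul]
            have : (0 : ℝ) ≤ 1 / ((j : ℝ) + 1) := by positivity
            linarith
    · have hb1 : ‖((w j t ^ 2 * ff n t : ℝ) : ℂ) •
          (star (x j (rho n t)) * q (rho n t) * x j (rho n t))‖ ≤ δ j * (‖x j‖ ^ 2 * ‖q‖) := by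
        rw [norm_real_smul]
        have hA : |w j t ^ 2 * ff n t| ≤ δ j := by
          rw [abs_of_nonneg (mul_nonneg (sq_nonneg _) (ff_nonneg n t))]
          have hw2 : w j t ^ 2 ≤ 1 := by
            have h := hw01 j t
            nlinarith [h.1, h.2]
          have := mul_le_mul_of_nonneg_right hw2 (ff_nonneg n t)
          rw [one_mul] at this
          linarith [hlt.le]
        have hB : ‖star (x j (rho n t)) * q (rho n t) * x j (rho n t)‖
            ≤ ‖x j‖ ^ 2 * ‖q‖ := by
          calc ‖star (x j (rho n t)) * q (rho n t) * x j (rho n t)‖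
              ≤ ‖x j (rho n t)‖ ^ 2 * ‖q (rho n t)‖ := norm_conj_bound _ _
            _ ≤ ‖x j‖ ^ 2 * ‖q‖ := by
                have h1 := ContinuousMap.norm_coe_le_norm (x j) (rho n t)
                have h2 := ContinuousMap.norm_coe_le_norm q (rho n t)
                have h3 : (0:ℝ) ≤ ‖x j (rho n t)‖ := norm_nonneg _
                have h4 : (0:ℝ) ≤ ‖q (rho n t)‖ := norm_nonneg _
                have h5 : ‖x j (rho n t)‖ ^ 2 ≤ ‖x j‖ ^ 2 := by nlinarith
                exact mul_le_mul h5 h2 h4 (by positivity)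
        exact mul_le_mul hA hB (norm_nonneg _) (hδpos j).le
      have hb2 : ‖((ff n t : ℝ) : ℂ) • p (rho n t)‖ ≤ δ j * ‖p‖ := by
        rw [norm_real_smul, abs_of_nonneg (ff_nonneg n t)]
        have h1 := ContinuousMap.norm_coe_le_norm p (rho n t)
        have h2 := ff_nonneg n t
        nlinarith [hlt.le, (hδpos j).le, norm_nonneg (p (rho n t)), norm_nonneg p]
      have hstep1 : ‖((w j t ^ 2 * ff n t : ℝ) : ℂ) •
          (star (x j (rho n t)) * q (rho n t) * x j (rho n t))
          - ((ff n t : ℝ) : ℂ) • p (rho n t)‖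
          ≤ δ j * (‖x j‖ ^ 2 * ‖q‖) + δ j * ‖p‖ :=
        le_trans (norm_sub_le _ _) (add_le_add hb1 hb2)
      have hstep2 : δ j * (‖x j‖ ^ 2 * ‖q‖) + δ j * ‖p‖ ≤ δ j * C j := by
        simp only [hC]
        nlinarith [(hδpos j).le]
      have hstep3 : δ j * C j = 1 / ((j : ℝ) + 1) := by
        simp only [hδ]
        exact div_mul_cancel₀ _ (ne_of_gt (hCpos j))
      have hstep4 := norm_nonneg (star (x j) * q * x j - p)
      exact le_trans hstep1 (le_trans (le_trans hstep2 (le_of_eq hstep3))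
        (le_add_of_nonneg_left hstep4))
  refine squeeze_zero (fun j => norm_nonneg _) key ?_
  have := hx.add tendsto_one_div_add_atTop_nhds_zero_nat
  simpa using this

end

end Stmt14Proof

/-- for `Y = S^{n_1} × ⋯ × S^{n_k}` and `N = k + (n_1 + ⋯ + n_k)`, the
projections of `C(Y, Mₘ(ℂ))` embed into the positive elements of `C([0,1]^N, Mₘ(ℂ))`
in a way which preserves and reflects Cuntz subequivalence (hence induces an order
embedding of the projection classes over `Y` into the Cuntz classes over `[0,1]^N`). -/
theorem stmt14 (k : ℕ) (n : Fin k → ℕ) (m : ℕ) :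
    ∃ ι : {p : C((i : Fin k) → Metric.sphere (0 : EuclideanSpace ℝ (Fin (n i + 1))) 1,
              Matrix (Fin m) (Fin m) ℂ) // IsSelfAdjoint p ∧ IsIdempotentElem p} →
          {a : C(Fin (k + ∑ i, n i) → Set.Icc (0 : ℝ) 1,
              Matrix (Fin m) (Fin m) ℂ) // ∀ x, (a x).PosSemidef},
      ∀ p q, CuntzLE (ι p).1 (ι q).1 ↔ CuntzLE p.1 q.1 := by
  refine ⟨fun p => ⟨Stmt14Proof.iotaC n p.1,
    fun t => Stmt14Proof.iotaC_pos n p.1 p.2.1 p.2.2 t⟩, fun p q => ?_⟩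
  exact ⟨fun h => Stmt14Proof.cuntz_reflect n p.1 q.1 h,
    fun h => Stmt14Proof.cuntz_preserve n p.1 q.1 h⟩
end
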